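/- The function $z \mapsto \|z\|_{\mathsf{X}} := \max_{\sigma \in \mathbb{R}} \left(|z_1 e^{i\sigma} + \bar{z_4}| + |z_2 e^{i\sigma} + \bar{z_3}|\right)$ defines a norm on $\mathbb{C}^4$. -/

import Mathlib

open Complex Real

noncomputable def Xfun (z : Fin 4 → ℂ) (σ : ℝ) : ℝ :=
  ‖z 0 * Complex.exp (σ * Complex.I) + (starRingEnd ℂ) (z 3)‖ +
  ‖z 1 * Complex.exp (σ * Complex.I) + (starRingEnd ℂ) (z 2)‖

noncomputable def Xnorm (z : Fin 4 → ℂ) : ℝ := ⨆ σ : ℝ, Xfun z σ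

noncomputable def phase (z : Fin 4 → ℂ) : ℝ :=
  (Complex.arg (z 0) + Complex.arg (z 3)) - (Complex.arg (z 1) + Complex.arg (z 2))

lemma Xfun_cont (z : Fin 4 → ℂ) : Continuous (Xfun z) := by
  unfold Xfun
  apply Continuous.add <;> exact continuous_norm.comp (by continuity)

lemma Xfun_periodic (z : Fin 4 → ℂ) : Function.Periodic (Xfun z) (2 * π) := by
  intro σ
  have h : Complex.exp ((↑(σ + 2 * π) : ℂ) * Complex.I) = Complex.exp ((σ : ℂ) * Complex.I) := by
    push_cast
    rw [add_mul, Complex.exp_add, Complex.exp_two_pi_mul_I, mul_one]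
  simp only [Xfun, h]

lemma Xfun_nonneg (z : Fin 4 → ℂ) (σ : ℝ) : 0 ≤ Xfun z σ :=
  add_nonneg (norm_nonneg _) (norm_nonneg _)

lemma Xfun_le (z : Fin 4 → ℂ) (σ : ℝ) :
    Xfun z σ ≤ ‖z 0‖ + ‖z 3‖ + (‖z 1‖ + ‖z 2‖) := by
  unfold Xfun
  refine add_le_add ((norm_add_le _ _).trans ?_) ((norm_add_le _ _).trans ?_) <;>
    simp [norm_mul, Complex.norm_exp_ofReal_mul_I]

lemma Xfun_bddAbove (z : Fin 4 → ℂ) : BddAbove (Set.range (Xfun z)) := by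
  refine ⟨‖z 0‖ + ‖z 3‖ + (‖z 1‖ + ‖z 2‖), ?_⟩
  rintro y ⟨σ, rfl⟩
  exact Xfun_le z σ

lemma Xfun_exists_max (z : Fin 4 → ℂ) :
    ∃ σ : ℝ, IsGreatest (Set.range (Xfun z)) (Xfun z σ) := by
  have hπ : (0 : ℝ) < 2 * π := by positivity
  obtain ⟨σ, hσ, hmax⟩ := (isCompact_Icc (a := (0:ℝ)) (b := 0 + 2 * π)).exists_isMaxOn
    ⟨0, by constructor <;> [rfl; linarith]⟩ (Xfun_cont z).continuousOn
  refine ⟨σ, ⟨⟨σ, rfl⟩, ?_⟩⟩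
  rintro y ⟨τ, rfl⟩
  have : Xfun z τ ∈ Xfun z '' Set.Icc 0 (0 + 2 * π) := by
    rw [(Xfun_periodic z).image_Icc hπ 0]
    exact ⟨τ, rfl⟩
  obtain ⟨τ', hτ', hτeq⟩ := this
  rw [← hτeq]
  exact hmax hτ'

lemma le_Xnorm (z : Fin 4 → ℂ) (σ : ℝ) : Xfun z σ ≤ Xnorm z :=
  le_ciSup (Xfun_bddAbove z) σ

lemma Xnorm_eq (z : Fin 4 → ℂ) {σ : ℝ} (h : IsGreatest (Set.range (Xfun z)) (Xfun z σ)) :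
    Xnorm z = Xfun z σ := h.csSup_eq

lemma key (a w u : ℂ) (σ : ℝ) :
    ‖a * w * Complex.exp ((σ : ℂ) * Complex.I) + (starRingEnd ℂ) (a * u)‖ =
    ‖a‖ * ‖w * Complex.exp ((↑(σ + 2 * Complex.arg a) : ℂ) * Complex.I)
      + (starRingEnd ℂ) u‖ := by
  set r : ℝ := ‖a‖ with hr
  set θ : ℝ := Complex.arg a with hθ
  have ha : a = (r : ℂ) * Complex.exp ((θ : ℂ) * Complex.I) := (Complex.norm_mul_exp_arg_mul_I a).symm
  have h2 : Complex.exp ((θ : ℂ) * Complex.I) * Complex.exp ((σ : ℂ) * Complex.I)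
      = Complex.exp (-((θ : ℂ) * Complex.I)) * Complex.exp ((↑(σ + 2 * θ) : ℂ) * Complex.I) := by
    rw [← Complex.exp_add, ← Complex.exp_add]
    congr 1
    push_cast
    ring
  have h1 : a * w * Complex.exp ((σ : ℂ) * Complex.I) + (starRingEnd ℂ) (a * u)
      = (r : ℂ) * Complex.exp (-((θ : ℂ) * Complex.I))
        * (w * Complex.exp ((↑(σ + 2 * θ) : ℂ) * Complex.I) + (starRingEnd ℂ) u) := by
    rw [ha, map_mul, map_mul, Complex.conj_ofReal, ← Complex.exp_conj]
    simp only [map_mul, Complex.conj_ofReal, Complex.conj_I, mul_neg, neg_mul]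
    linear_combination (r : ℂ) * w * h2
  have hr0 : 0 ≤ r := norm_nonneg a
  rw [h1, norm_mul, norm_mul]
  simp [Complex.norm_exp, Complex.norm_real, _root_.abs_of_nonneg hr0]

lemma Xfun_smul (a : ℂ) (z : Fin 4 → ℂ) (σ : ℝ) :
    Xfun (a • z) σ = ‖a‖ * Xfun z (σ + 2 * Complex.arg a) := by
  simp only [Xfun, Pi.smul_apply, smul_eq_mul, key, mul_add]

lemma iSup_shift (f : ℝ → ℝ) (c : ℝ) : (⨆ σ : ℝ, f (σ + c)) = ⨆ σ : ℝ, f σ := by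
  rw [iSup, iSup]
  congr 1
  ext y
  constructor <;> rintro ⟨x, rfl⟩
  · exact ⟨x + c, rfl⟩
  · exact ⟨x - c, by show f (x - c + c) = f x; congr 1; ring⟩

theorem stmt_3 :
    (∀ z : Fin 4 → ℂ, ∃ σ : ℝ, IsGreatest (Set.range (Xfun z)) (Xfun z σ) ∧ Xnorm z = Xfun z σ) ∧
    (∀ (a : ℂ) (z : Fin 4 → ℂ), Xnorm (a • z) = ‖a‖ * Xnorm z) ∧
    (∀ z w : Fin 4 → ℂ, Xnorm (z + w) ≤ Xnorm z + Xnorm w) ∧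
    (∀ z : Fin 4 → ℂ, Xnorm z = 0 ↔ z = 0) := by
  refine ⟨?_, ?_, ?_, ?_⟩
  · intro z
    obtain ⟨σ, h⟩ := Xfun_exists_max z
    exact ⟨σ, h, Xnorm_eq z h⟩
  · intro a z
    have : Xnorm (a • z) = ⨆ σ : ℝ, ‖a‖ * Xfun z (σ + 2 * Complex.arg a) := by
      unfold Xnorm
      exact iSup_congr fun σ => Xfun_smul a z σ
    rw [this, ← Real.mul_iSup_of_nonneg (norm_nonneg a), Xnorm,
      iSup_shift (Xfun z) (2 * Complex.arg a)]
  · intro z w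
    obtain ⟨σ, hg⟩ := Xfun_exists_max (z + w)
    rw [Xnorm_eq _ hg]
    have h1 : Xfun (z + w) σ ≤ Xfun z σ + Xfun w σ := by
      simp only [Xfun, Pi.add_apply, map_add]
      have e0 : (z 0 + w 0) * Complex.exp ((σ : ℂ) * Complex.I)
          + ((starRingEnd ℂ) (z 3) + (starRingEnd ℂ) (w 3))
          = (z 0 * Complex.exp ((σ : ℂ) * Complex.I) + (starRingEnd ℂ) (z 3))
          + (w 0 * Complex.exp ((σ : ℂ) * Complex.I) + (starRingEnd ℂ) (w 3)) := by ring
      have e1 : (z 1 + w 1) * Complex.exp ((σ : ℂ) * Complex.I)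
          + ((starRingEnd ℂ) (z 2) + (starRingEnd ℂ) (w 2))
          = (z 1 * Complex.exp ((σ : ℂ) * Complex.I) + (starRingEnd ℂ) (z 2))
          + (w 1 * Complex.exp ((σ : ℂ) * Complex.I) + (starRingEnd ℂ) (w 2)) := by ring
      rw [e0, e1]
      have := norm_add_le (z 0 * Complex.exp ((σ : ℂ) * Complex.I) + (starRingEnd ℂ) (z 3))
        (w 0 * Complex.exp ((σ : ℂ) * Complex.I) + (starRingEnd ℂ) (w 3))
      have := norm_add_le (z 1 * Complex.exp ((σ : ℂ) * Complex.I) + (starRingEnd ℂ) (z 2))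
        (w 1 * Complex.exp ((σ : ℂ) * Complex.I) + (starRingEnd ℂ) (w 2))
      linarith
    exact h1.trans (add_le_add (le_Xnorm z σ) (le_Xnorm w σ))
  · intro z
    constructor
    · intro h
      have hz : ∀ σ : ℝ, Xfun z σ = 0 := fun σ =>
        le_antisymm (h ▸ le_Xnorm z σ) (Xfun_nonneg z σ)
      have h0 := hz 0
      have hπ := hz π
      simp only [Xfun, Complex.ofReal_zero, zero_mul, Complex.exp_zero, mul_one,
        Complex.exp_pi_mul_I, mul_neg_one] at h0 hπ
      have a0 := (norm_nonneg (z 0 * 1 + (starRingEnd ℂ) (z 3)))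
      -- extract each term zero
      have t1 : z 0 + (starRingEnd ℂ) (z 3) = 0 := by
        have := norm_nonneg (z 1 + (starRingEnd ℂ) (z 2))
        have := norm_nonneg (z 0 + (starRingEnd ℂ) (z 3))
        have h01 : ‖z 0 + (starRingEnd ℂ) (z 3)‖ = 0 := by linarith
        exact norm_eq_zero.mp h01
      have t2 : z 1 + (starRingEnd ℂ) (z 2) = 0 := by
        have := norm_nonneg (z 1 + (starRingEnd ℂ) (z 2))
        have := norm_nonneg (z 0 + (starRingEnd ℂ) (z 3))
        have h01 : ‖z 1 + (starRingEnd ℂ) (z 2)‖ = 0 := by linarith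
        exact norm_eq_zero.mp h01
      have t3 : -(z 0) + (starRingEnd ℂ) (z 3) = 0 := by
        have := norm_nonneg (-(z 1) + (starRingEnd ℂ) (z 2))
        have := norm_nonneg (-(z 0) + (starRingEnd ℂ) (z 3))
        have h01 : ‖-(z 0) + (starRingEnd ℂ) (z 3)‖ = 0 := by linarith
        exact norm_eq_zero.mp h01
      have t4 : -(z 1) + (starRingEnd ℂ) (z 2) = 0 := by
        have := norm_nonneg (-(z 1) + (starRingEnd ℂ) (z 2))
        have := norm_nonneg (-(z 0) + (starRingEnd ℂ) (z 3))
        have h01 : ‖-(z 1) + (starRingEnd ℂ) (z 2)‖ = 0 := by linarith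
        exact norm_eq_zero.mp h01
      have hz0 : z 0 = 0 := by linear_combination (t1 - t3) / 2
      have hz1 : z 1 = 0 := by linear_combination (t2 - t4) / 2
      have hz3 : z 3 = 0 := by
        have : (starRingEnd ℂ) (z 3) = 0 := by linear_combination (t1 + t3) / 2
        simpa using congrArg (starRingEnd ℂ) this
      have hz2 : z 2 = 0 := by
        have : (starRingEnd ℂ) (z 2) = 0 := by linear_combination (t2 + t4) / 2
        simpa using congrArg (starRingEnd ℂ) this
      funext i
      fin_cases i <;> simp [hz0, hz1, hz2, hz3]
    · rintro rfl
      have : ∀ σ : ℝ, Xfun 0 σ = 0 := fun σ => by simp [Xfun]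
      simp only [Xnorm, this, ciSup_const]
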